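/- For every positive integer n there exists a word of length 4^n + n - 1 over a 4-letter alphabet whose number of distinct length-n subwords is exactly 4^n (i.e., achieving maximal complexity, a de Bruijn-type sequence). -/

import Mathlib

open List Real Filter

/-- The list of length-`n` windows (contiguous subwords) of `w`. -/
def windows4 (w : List (Fin 4)) (n : ℕ) : List (List (Fin 4)) :=
  (List.range (w.length + 1 - n)).map (fun i => (w.drop i).take n)

/-- The complexity function: number of distinct length-`n` contiguous subwords of `w`. -/
def compl4 (w : List (Fin 4)) (n : ℕ) : ℕ := (windows4 w n).toFinset.card

/-- Topological entropy of a finite word, computed at word length `n`. -/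
noncomputable def Htop4 (w : List (Fin 4)) (n : ℕ) : ℝ :=
  Real.logb 4 (compl4 w n) / n

set_option linter.unusedSectionVars false

section
variable {α : Type*} [DecidableEq α]

lemma count_map_eq (f : α → α) (l : List α) (u : α) :
    (l.map f).count u = (l.filter (fun e => f e = u)).length := by
  induction l with
  | nil => simp
  | cons a l ih =>
    by_cases h : f a = u <;> simp [List.count_cons, h, ih, List.filter_cons]

lemma src_tail_eq_dst_dropLast (R : α → α → Prop) (f g : α → α)
    (hR : ∀ a b, R a b → g a = f b) :
    ∀ t : List α, List.Chain' R t → (t.map f).tail = (t.map g).dropLast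
  | [], _ => by simp
  | [e], _ => by simp
  | e :: e' :: t, h => by
    have h1 : R e e' := (List.isChain_cons_cons.mp h).1
    have ih := src_tail_eq_dst_dropLast R f g hR (e' :: t) (List.isChain_cons_cons.mp h).2
    show List.map f (e' :: t) = (List.map g (e :: e' :: t)).dropLast
    rw [List.map_cons (f := g), List.dropLast_cons_of_ne_nil (by simp), ← ih, hR _ _ h1]
    simp

/-- the counting identity at a vertex u -/
lemma count_src_dst (R : α → α → Prop) (f g : α → α)
    (hR : ∀ a b, R a b → g a = f b) (t : List α) (hne : t ≠ [])
    (hch : List.Chain' R t) (u : α) :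
    (t.map f).count u + (if g (t.getLast hne) = u then 1 else 0) =
      (t.map g).count u + (if f (t.headD (t.getLast hne)) = u then 1 else 0) := by
  have key := src_tail_eq_dst_dropLast R f g hR t hch
  have hA : t.map f ≠ [] := by simpa using hne
  have hB : t.map g ≠ [] := by simpa using hne
  have hAeq : t.map f = f (t.headD (t.getLast hne)) :: (t.map f).tail := by
    cases t with
    | nil => exact absurd rfl hne
    | cons a l => simp
  have hBeq : t.map g = (t.map g).dropLast ++ [g (t.getLast hne)] := by
    rw [← List.getLast_map (f := g) ]
    · exact (List.dropLast_append_getLast hB).symm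
  calc (t.map f).count u + (if g (t.getLast hne) = u then 1 else 0)
      = ((if f (t.headD (t.getLast hne)) = u then 1 else 0) + ((t.map f).tail).count u)
        + (if g (t.getLast hne) = u then 1 else 0) := by
        conv_lhs => rw [hAeq]
        by_cases h : f (t.headD (t.getLast hne)) = u <;> simp [List.count_cons, h] <;> omega
    _ = ((t.map g).dropLast.count u + (if g (t.getLast hne) = u then 1 else 0))
        + (if f (t.headD (t.getLast hne)) = u then 1 else 0) := by rw [key]; ring
    _ = (t.map g).count u + (if f (t.headD (t.getLast hne)) = u then 1 else 0) := by
        conv_rhs => rw [hBeq]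
        by_cases h : g (t.getLast hne) = u <;> simp [List.count_append, List.count_singleton, h]
end
open List



structure IsTrail (n : ℕ) (t : List (List (Fin 4))) : Prop where
  lens : ∀ e ∈ t, e.length = n
  nodup : t.Nodup
  chain : t.Chain' (fun e f => e.drop 1 = f.take (n - 1))

def word4 : List (List (Fin 4)) → List (Fin 4)
  | [] => []
  | [e] => e
  | e :: f :: t => e.headD 0 :: word4 (f :: t)

lemma word4_take {n : ℕ} (hn : 1 ≤ n) :
    ∀ t : List (List (Fin 4)), IsTrail n t → t ≠ [] → (word4 t).take n = t.headD []
  | [], _, h => absurd rfl h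
  | [e], ht, _ => by
      simp [word4, List.take_of_length_le (le_of_eq (ht.lens e (by simp)))]
  | e :: f :: t, ht, _ => by
    have ih := word4_take hn (f :: t)
      ⟨fun x hx => ht.lens x (List.mem_cons_of_mem _ hx),
       (List.nodup_cons.mp ht.nodup).2,
       (List.isChain_cons.mp ht.chain).2⟩ (by simp)
    have he : e.length = n := ht.lens e (by simp)
    have hrel : e.drop 1 = f.take (n - 1) := by
      have := ht.chain; exact (List.isChain_cons_cons.mp this).1
    have hne : e ≠ [] := by intro h; rw [h] at he; simp at he; omega
    have hn1 : n - 1 + 1 = n := by omega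
    show (e.headD 0 :: word4 (f :: t)).take n = e
    rw [← hn1, List.take_succ_cons]
    have : (word4 (f :: t)).take (n - 1) = e.drop 1 := by
      rw [hrel]
      have h2 : List.take (n-1) (word4 (f::t)) = List.take (n-1) (List.take n (word4 (f::t))) := by
        rw [List.take_take]; congr 1; omega
      rw [h2, ih]; rfl
    rw [this]
    cases e with
    | nil => exact absurd rfl hne
    | cons a l => simp

lemma word4_length {n : ℕ} (hn : 1 ≤ n) :
    ∀ t : List (List (Fin 4)), IsTrail n t → t ≠ [] →
      (word4 t).length = n + (t.length - 1)
  | [], _, h => absurd rfl h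
  | [e], ht, _ => by simp [word4, ht.lens e (by simp)]
  | e :: f :: t, ht, _ => by
    have ih := word4_length hn (f :: t)
      ⟨fun x hx => ht.lens x (List.mem_cons_of_mem _ hx),
       (List.nodup_cons.mp ht.nodup).2,
       (List.isChain_cons.mp ht.chain).2⟩ (by simp)
    show (e.headD 0 :: word4 (f :: t)).length = _
    simp only [List.length_cons, ih]
    simp; omega

lemma windows4_cons {n : ℕ} (a : Fin 4) (w : List (Fin 4)) (h : n ≤ w.length + 1) :
    windows4 (a :: w) n = ((a :: w).take n) :: windows4 w n := by
  unfold windows4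
  have h2 : (a :: w).length + 1 - n = (w.length + 1 - n) + 1 := by simp; omega
  rw [h2, List.range_succ_eq_map]
  simp [Function.comp]

lemma windows4_word4 {n : ℕ} (hn : 1 ≤ n) :
    ∀ t : List (List (Fin 4)), IsTrail n t → t ≠ [] → windows4 (word4 t) n = t
  | [], _, h => absurd rfl h
  | [e], ht, _ => by
    have he : e.length = n := ht.lens e (by simp)
    unfold windows4 word4
    rw [he]
    have : n + 1 - n = 1 := by omega
    rw [this]
    simp [List.range_succ, List.take_of_length_le (le_of_eq he)]
  | e :: f :: t, ht, _ => by
    have ht' : IsTrail n (f :: t) :=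
      ⟨fun x hx => ht.lens x (List.mem_cons_of_mem _ hx),
       (List.nodup_cons.mp ht.nodup).2,
       (List.isChain_cons.mp ht.chain).2⟩
    have ih := windows4_word4 hn (f :: t) ht' (by simp)
    have hlen := word4_length hn (f :: t) ht' (by simp)
    show windows4 (e.headD 0 :: word4 (f :: t)) n = _
    rw [windows4_cons _ _ (by rw [hlen]; omega), ih]
    congr 1
    have := word4_take hn (e :: f :: t) ht (by simp)
    simpa [word4] using this


/-- all words of length n -/
def allW (n : ℕ) : Finset (List (Fin 4)) := Finset.image List.ofFn (Finset.univ : Finset (Fin n → Fin 4))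

lemma mem_allW {n : ℕ} {e : List (Fin 4)} : e ∈ allW n ↔ e.length = n := by
  constructor
  · rintro h
    simp only [allW, Finset.mem_image] at h
    obtain ⟨f, -, rfl⟩ := h
    simp
  · intro h
    simp only [allW, Finset.mem_image]
    refine ⟨fun i => e.get (Fin.cast h.symm i), Finset.mem_univ _, ?_⟩
    apply List.ext_getElem (by simp [h])
    intro i h1 h2
    simp

lemma card_allW (n : ℕ) : (allW n).card = 4 ^ n := by
  rw [allW, Finset.card_image_of_injective _ List.ofFn_injective]
  simp

lemma trail_len_le {n : ℕ} {t : List (List (Fin 4))} (ht : IsTrail n t) : t.length ≤ 4 ^ n := by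
  rw [← List.toFinset_card_of_nodup ht.nodup, ← card_allW n]
  exact Finset.card_le_card (fun e he => mem_allW.mpr (ht.lens e (List.mem_toFinset.mp he)))

lemma len_ge_of_all {n : ℕ} {t : List (List (Fin 4))} (hnd : t.Nodup)
    (hall : ∀ e : List (Fin 4), e.length = n → e ∈ t) : 4 ^ n ≤ t.length := by
  rw [← List.toFinset_card_of_nodup hnd, ← card_allW n]
  exact Finset.card_le_card (fun e he => List.mem_toFinset.mpr (hall e (mem_allW.mp he)))

/-- in-edge bound: at most 4 edges in a nodup list end at u -/
lemma in_edges_le {n : ℕ} {t : List (List (Fin 4))} (ht : IsTrail n t) (hn : 1 ≤ n)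
    (u : List (Fin 4)) :
    (t.filter (fun e => e.drop 1 = u)).length ≤ 4 := by
  have hnd : (t.filter (fun e => e.drop 1 = u)).Nodup := ht.nodup.filter _
  rw [← List.toFinset_card_of_nodup hnd]
  have : (t.filter (fun e => e.drop 1 = u)).toFinset ⊆
      Finset.image (fun a : Fin 4 => a :: u) Finset.univ := by
    intro e he
    rw [List.mem_toFinset, List.mem_filter] at he
    obtain ⟨he1, he2⟩ := he
    simp only [decide_eq_true_eq] at he2
    have hlen : e.length = n := ht.lens e he1
    have hne : e ≠ [] := by intro h; rw [h] at hlen; simp at hlen; omega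
    obtain ⟨a, e', rfl⟩ := List.exists_cons_of_ne_nil hne
    simp only [List.drop_one, List.tail_cons] at he2
    subst he2
    simp
  calc _ ≤ (Finset.image (fun a : Fin 4 => a :: u) Finset.univ).card := Finset.card_le_card this
    _ ≤ (Finset.univ : Finset (Fin 4)).card := Finset.card_image_le
    _ = 4 := by simp

/-- out-edge count: if all 4 out-edges of u are in t, the filter has length ≥ 4 -/
lemma out_edges_ge {n : ℕ} {t : List (List (Fin 4))} (ht : IsTrail n t)
    (u : List (Fin 4)) (hu : ∀ a : Fin 4, u ++ [a] ∈ t) (hul : u.length = n - 1) :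
    4 ≤ (t.filter (fun e => e.take (n-1) = u)).length := by
  have hnd : (t.filter (fun e => e.take (n-1) = u)).Nodup := ht.nodup.filter _
  rw [← List.toFinset_card_of_nodup hnd]
  have : Finset.image (fun a : Fin 4 => u ++ [a]) Finset.univ ⊆
      (t.filter (fun e => e.take (n-1) = u)).toFinset := by
    intro e he
    simp only [Finset.mem_image] at he
    obtain ⟨a, -, rfl⟩ := he
    rw [List.mem_toFinset, List.mem_filter]
    refine ⟨hu a, ?_⟩
    simp only [decide_eq_true_eq]
    rw [List.take_append, List.take_of_length_le (by omega), hul]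
    simp
  calc (4:ℕ) = (Finset.image (fun a : Fin 4 => u ++ [a]) Finset.univ).card := by
        rw [Finset.card_image_of_injective _ (fun a b h => by simpa using h)]; simp
    _ ≤ _ := Finset.card_le_card this

lemma reach {S : Finset (List (Fin 4))}
    (hstep : ∀ u ∈ S, ∀ a : Fin 4, (u ++ [a]).drop 1 ∈ S) :
    ∀ (l : List (Fin 4)) (u : List (Fin 4)), u ∈ S → (u ++ l).drop l.length ∈ S
  | [], u, hu => by simpa using hu
  | a :: l, u, hu => by
    have h1 : (u ++ [a]).drop 1 ∈ S := hstep u hu a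
    have ih := reach hstep l _ h1
    have heq : (u ++ a :: l).drop (a :: l).length = ((u ++ [a]).drop 1 ++ l).drop l.length := by
      rw [List.append_cons u a l]
      have h0 : 1 - (u ++ [a]).length = 0 := by simp
      have h5 : ((u ++ [a]) ++ l).drop 1 = (u ++ [a]).drop 1 ++ l := by
        rw [List.drop_append, h0, List.drop_zero]
      rw [← h5, List.drop_drop]
      congr 1
      simp [Nat.add_comm]
    rw [heq]; exact ih

lemma extend_or_all {n : ℕ} (hn : 1 ≤ n) {t : List (List (Fin 4))} (ht : IsTrail n t)
    (hne : t ≠ []) (hmax : ∀ t', IsTrail n t' → t'.length ≤ t.length) :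
    ∀ a : Fin 4, ((t.getLast hne).drop 1 ++ [a]) ∈ t := by
  intro a
  by_contra hg
  set e := t.getLast hne with he
  set gE := e.drop 1 ++ [a] with hgE
  have hel : e.length = n := ht.lens e (List.getLast_mem hne)
  have hgl : gE.length = n := by rw [hgE]; simp; omega
  have htake : gE.take (n - 1) = e.drop 1 := by
    rw [hgE, List.take_append,
      List.take_of_length_le (by simp; omega)]
    have : (n - 1) - (e.drop 1).length = 0 := by simp; omega
    rw [this]; simp
  have htr : IsTrail n (t ++ [gE]) := by
    refine ⟨?_, ?_, ?_⟩
    · intro x hx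
      rcases List.mem_append.mp hx with h | h
      · exact ht.lens x h
      · simp at h; subst h; exact hgl
    · rw [List.nodup_append]
      exact ⟨ht.nodup, List.nodup_singleton _, by
        intro x hx y hy; simp at hy; subst hy; intro h; subst h; exact hg hx⟩
    · apply List.isChain_append.mpr
      refine ⟨ht.chain, List.isChain_singleton _, ?_⟩
      intro x hx y hy
      rw [List.getLast?_eq_getLast hne] at hx
      simp at hx hy
      subst hx; subst hy
      rw [htake]
  have := hmax _ htr
  simp at this

lemma max_trail_closed {n : ℕ} (hn : 1 ≤ n) {t : List (List (Fin 4))} (ht : IsTrail n t)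
    (hne : t ≠ []) (hmax : ∀ t', IsTrail n t' → t'.length ≤ t.length) :
    (t.headD []).take (n - 1) = (t.getLast hne).drop 1 := by
  set u := (t.getLast hne).drop 1 with hu
  have hul : u.length = n - 1 := by
    rw [hu]; simp [ht.lens _ (List.getLast_mem hne)]
  have hout : ∀ a, u ++ [a] ∈ t := extend_or_all hn ht hne hmax
  have h4le := out_edges_ge ht u hout hul
  have hle4 := in_edges_le ht hn u
  have hcount := count_src_dst (fun e f => e.drop 1 = f.take (n-1))
    (fun e => e.take (n-1)) (fun e => e.drop 1) (fun a b h => h) t hne ht.chain u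
  rw [count_map_eq, count_map_eq] at hcount
  rw [if_pos (show (t.getLast hne).drop 1 = u from rfl)] at hcount
  have hhd : t.headD (t.getLast hne) = t.headD [] := by
    cases t with
    | nil => exact absurd rfl hne
    | cons a l => rfl
  rw [hhd] at hcount
  by_cases hif : (t.headD []).take (n-1) = u
  · exact hif
  · rw [if_neg hif] at hcount; omega

lemma dst_mem_src {n : ℕ} {t : List (List (Fin 4))} (ht : IsTrail n t) (hne : t ≠ [])
    (hcl : (t.headD []).take (n - 1) = (t.getLast hne).drop 1) :
    ∀ e ∈ t, e.drop 1 ∈ (t.map (fun e => e.take (n-1))).toFinset := by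
  intro e het
  have key := src_tail_eq_dst_dropLast (fun e f => e.drop 1 = f.take (n-1))
    (fun e => e.take (n-1)) (fun e => e.drop 1) (fun a b h => h) t ht.chain
  have hB : t.map (fun e => e.drop 1) ≠ [] := by simpa using hne
  have hBeq : t.map (fun e => e.drop 1) =
      (t.map (fun e => e.take (n-1))).tail ++ [(t.getLast hne).drop 1] := by
    have h6 := List.dropLast_append_getLast hB
    have h7 : (t.map (fun e => e.drop 1)).getLast hB = (t.getLast hne).drop 1 := by
      rw [List.getLast_map]
    rw [← key, h7] at h6
    exact h6.symm
  have hmem : e.drop 1 ∈ t.map (fun e => e.drop 1) := List.mem_map_of_mem het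
  rw [hBeq] at hmem
  rw [List.mem_toFinset]
  rcases List.mem_append.mp hmem with h | h
  · exact List.mem_of_mem_tail h
  · have h' := List.mem_singleton.mp h
    rw [h', ← hcl]
    have : t.headD [] ∈ t := by
      cases t with
      | nil => exact absurd rfl hne
      | cons a l => exact List.mem_cons_self
    exact List.mem_map_of_mem this

lemma trail_rotate {n : ℕ} {t1 t2 : List (List (Fin 4))} (ht : IsTrail n (t1 ++ t2))
    (hne : t1 ++ t2 ≠ [])
    (hcl : ((t1 ++ t2).headD []).take (n-1) = ((t1 ++ t2).getLast hne).drop 1) :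
    IsTrail n (t2 ++ t1) := by
  refine ⟨?_, ?_, ?_⟩
  · intro x hx; exact ht.lens x (by rw [List.mem_append] at *; tauto)
  · exact (List.perm_append_comm).nodup ht.nodup
  · rcases List.isChain_append.mp ht.chain with ⟨hc1, hc2, hj⟩
    apply List.isChain_append.mpr
    refine ⟨hc2, hc1, ?_⟩
    intro x hx y hy
    have h2ne : t2 ≠ [] := by rintro rfl; simp at hx
    have h1ne : t1 ≠ [] := by rintro rfl; simp at hy
    rw [List.getLast?_eq_getLast h2ne] at hx
    rw [List.head?_eq_head h1ne] at hy
    have hx' : x = t2.getLast h2ne := by simpa using hx.symm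
    have hy' : y = t1.head h1ne := by simpa using hy.symm
    subst hx'; subst hy'
    have hlast : (t1 ++ t2).getLast hne = t2.getLast h2ne := List.getLast_append_of_ne_nil _ h2ne
    have hhead : (t1 ++ t2).headD [] = t1.head h1ne := by
      cases t1 with
      | nil => exact absurd rfl h1ne
      | cons a l => simp
    rw [← hlast, ← hhead]
    exact hcl.symm

theorem exists_trail_full (n : ℕ) (hn : 1 ≤ n) :
    ∃ t : List (List (Fin 4)), IsTrail n t ∧ t.length = 4 ^ n := by
  classical
  set P : ℕ → Prop := fun k => ∃ t, IsTrail n t ∧ t.length = k with hP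
  have hP1 : P 1 := ⟨[List.replicate n 0],
    ⟨by simp, List.nodup_singleton _, List.isChain_singleton _⟩, rfl⟩
  have h14 : 1 ≤ 4 ^ n := Nat.one_le_pow _ _ (by norm_num)
  obtain ⟨t, ht, htlen⟩ : P (Nat.findGreatest P (4 ^ n)) := Nat.findGreatest_spec h14 hP1
  have hmax : ∀ t', IsTrail n t' → t'.length ≤ t.length := by
    intro t' h'
    rw [htlen]
    exact Nat.le_findGreatest (trail_len_le h') ⟨t', h', rfl⟩
  have hmle : t.length ≤ 4 ^ n := trail_len_le ht
  have hne : t ≠ [] := by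
    intro h
    have h1 := hmax [List.replicate n 0]
      ⟨by simp, List.nodup_singleton _, List.isChain_singleton _⟩
    rw [h] at h1
    simp at h1
  refine ⟨t, ht, ?_⟩
  by_contra hlt'
  have hlt : t.length < 4 ^ n := lt_of_le_of_ne hmle hlt'
  have hcl := max_trail_closed hn ht hne hmax
  set S := (t.map (fun e => e.take (n-1))).toFinset with hS
  by_cases hcase : ∀ u ∈ S, ∀ a : Fin 4, u ++ [a] ∈ t
  · have hSlen : ∀ u ∈ S, u.length = n - 1 := by
      intro u hu
      rw [hS, List.mem_toFinset, List.mem_map] at hu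
      obtain ⟨e, het, rfl⟩ := hu
      rw [List.length_take, ht.lens e het]
      omega
    have hstep : ∀ u ∈ S, ∀ a : Fin 4, (u ++ [a]).drop 1 ∈ S :=
      fun u hu a => dst_mem_src ht hne hcl _ (hcase u hu a)
    have hhd : t.headD [] ∈ t := by
      cases t with
      | nil => exact absurd rfl hne
      | cons a l => exact List.mem_cons_self
    have hu0 : (t.headD []).take (n-1) ∈ S := by
      rw [hS, List.mem_toFinset]; exact List.mem_map_of_mem hhd
    have hu0len : ((t.headD []).take (n-1)).length = n - 1 := hSlen _ hu0
    have hallV : ∀ w : List (Fin 4), w.length = n - 1 → w ∈ S := by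
      intro w hw
      have h1 := reach hstep w _ hu0
      have h2 : ((t.headD []).take (n-1) ++ w).drop w.length = w := by
        rw [List.drop_append,
          List.drop_eq_nil_of_le (by omega)]
        have : w.length - ((t.headD []).take (n-1)).length = 0 := by omega
        rw [this, List.drop_zero, List.nil_append]
      rwa [h2] at h1
    have hallE : ∀ e : List (Fin 4), e.length = n → e ∈ t := by
      intro e hEl
      have hene : e ≠ [] := by intro h; rw [h] at hEl; simp at hEl; omega
      have h1 : e.take (n-1) ∈ S := hallV _ (by rw [List.length_take]; omega)
      have h2 := hcase _ h1 (e.getLast hene)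
      have h3 : e.take (n-1) ++ [e.getLast hene] = e := by
        have h4 := List.dropLast_append_getLast hene
        rw [List.dropLast_eq_take, hEl] at h4
        exact h4
      rwa [h3] at h2
    have := len_ge_of_all ht.nodup hallE
    omega
  · push_neg at hcase
    obtain ⟨u, hu, a, ha⟩ := hcase
    rw [hS, List.mem_toFinset, List.mem_map] at hu
    obtain ⟨e, het, hfe⟩ := hu
    obtain ⟨t1, t2, hteq⟩ := List.append_of_mem het
    subst hteq
    have hrot : IsTrail n ((e :: t2) ++ t1) := trail_rotate ht hne hcl
    have hrotne : (e :: t2) ++ t1 ≠ [] := by simp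
    have hmax' : ∀ t', IsTrail n t' → t'.length ≤ ((e :: t2) ++ t1).length := by
      intro t' h'
      calc t'.length ≤ (t1 ++ e :: t2).length := hmax t' h'
        _ = ((e :: t2) ++ t1).length := by simp; omega
    have hlast : (((e :: t2) ++ t1).getLast hrotne).drop 1 = u := by
      by_cases h1 : t1 = []
      · subst h1
        have h9 : ((e :: t2) ++ ([] : List (List (Fin 4)))).getLast hrotne
            = (e :: t2).getLast (by simp) := by
          apply Option.some.inj
          rw [← List.getLast?_eq_getLast, ← List.getLast?_eq_getLast, List.append_nil]
        rw [h9]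
        have hcl' := hcl
        have hhd : (([] : List (List (Fin 4))) ++ e :: t2).headD [] = e := by simp
        rw [hhd] at hcl'
        have h10 : (([] : List (List (Fin 4))) ++ e :: t2).getLast hne
            = (e :: t2).getLast (by simp) := by
          apply Option.some.inj
          rw [← List.getLast?_eq_getLast, ← List.getLast?_eq_getLast, List.nil_append]
        rw [h10] at hcl'
        rw [← hcl', hfe]
      · have h9 : ((e :: t2) ++ t1).getLast hrotne = t1.getLast h1 :=
          List.getLast_append_of_ne_nil _ h1
        rw [h9]
        rcases List.isChain_append.mp ht.chain with ⟨-, -, hj⟩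
        have := hj (t1.getLast h1) (by rw [List.getLast?_eq_getLast h1]; rfl)
          e (by simp)
        rw [this, hfe]
    have hext := extend_or_all hn hrot hrotne hmax' a
    rw [hlast] at hext
    apply ha
    rw [List.mem_append] at hext ⊢
    simp only [List.mem_cons] at *
    tauto


theorem stmt_14 (n : ℕ) (hn : 1 ≤ n) :
    ∃ w : List (Fin 4), w.length = 4 ^ n + n - 1 ∧ compl4 w n = 4 ^ n := by
  obtain ⟨t, ht, hlen⟩ := exists_trail_full n hn
  have h14 : 1 ≤ 4 ^ n := Nat.one_le_pow _ _ (by norm_num)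
  have hne : t ≠ [] := by
    intro h; rw [h] at hlen; simp at hlen; omega
  refine ⟨word4 t, ?_, ?_⟩
  · rw [word4_length hn t ht hne, hlen]; omega
  · unfold compl4
    rw [windows4_word4 hn t ht hne, List.toFinset_card_of_nodup ht.nodup, hlen]
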